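/- Let (V₁, ⟨·,·⟩_h, V₂, B) be a step-two Carnot datum with dim V₁ = m and let g be any inner product on V₂. Then δ(g) ≤ (3√3/2) · sup{ | ‖x‖_h²/N_g(x,t)² − (‖x‖_h⁶ + 16‖J^g_t x‖_h²)/N_g(x,t)⁶ | : (x,t) ∈ V₁ × V₂, (x,t) ≠ (0,0) }. -/

import Mathlib

open scoped RealInnerProductSpace

noncomputable section

variable {V₁ : Type*} [NormedAddCommGroup V₁] [InnerProductSpace ℝ V₁] [FiniteDimensional ℝ V₁]
variable {V₂ : Type*} [AddCommGroup V₂] [Module ℝ V₂] [FiniteDimensional ℝ V₂]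

/-- `g` is an inner product (symmetric positive-definite bilinear form) on `V₂`. -/
structure IsInnerProd (g : V₂ →ₗ[ℝ] V₂ →ₗ[ℝ] ℝ) : Prop where
  symm : ∀ s t : V₂, g s t = g t s
  posdef : ∀ t : V₂, t ≠ 0 → 0 < g t t

/-- The norm `‖t‖_g = √(g t t)` associated to a vertical inner product `g`. -/
def gnorm (g : V₂ →ₗ[ℝ] V₂ →ₗ[ℝ] ℝ) (t : V₂) : ℝ := Real.sqrt (g t t)

/-- The Hilbert–Schmidt norm `‖F‖_HS = √(trace(F* F))` of an endomorphism of the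
inner product space `V₁`. -/
def hsNorm (F : V₁ →ₗ[ℝ] V₁) : ℝ :=
  Real.sqrt (LinearMap.trace ℝ V₁ (LinearMap.adjoint F ∘ₗ F))

/-- `J` is the J-operator of the bracket `B` with respect to the vertical inner product `g`:
`⟨J_T U, V⟩_h = g(B(U,V), T)` for all `U V : V₁`, `T : V₂`. -/
def IsJOp (B : V₁ →ₗ[ℝ] V₁ →ₗ[ℝ] V₂) (g : V₂ →ₗ[ℝ] V₂ →ₗ[ℝ] ℝ)
    (J : V₂ → V₁ →ₗ[ℝ] V₁) : Prop :=
  ∀ (T : V₂) (U V : V₁), ⟪J T U, V⟫ = g (B U V) T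

/-- The H-type deviation relative to a fixed vertical inner product `g` with J-operator `J`:
`δ(g) = (dim V₁)^{-1/2} sup { ‖(J_T)² + id‖_HS : ‖T‖_g = 1 }`. -/
def deltaOf (g : V₂ →ₗ[ℝ] V₂ →ₗ[ℝ] ℝ) (J : V₂ → V₁ →ₗ[ℝ] V₁) : ℝ :=
  (Real.sqrt (Module.finrank ℝ V₁))⁻¹ *
    sSup ((fun T => hsNorm (J T ∘ₗ J T + LinearMap.id)) '' {T : V₂ | gnorm g T = 1})

/-- The H-type deviation of a step-two Carnot datum: the infimum of `δ(g)` over all vertical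
inner products `g` on `V₂`. -/
def htypeDeviation (B : V₁ →ₗ[ℝ] V₁ →ₗ[ℝ] V₂) : ℝ :=
  sInf { d : ℝ | ∃ (g : V₂ →ₗ[ℝ] V₂ →ₗ[ℝ] ℝ) (J : V₂ → V₁ →ₗ[ℝ] V₁),
    IsInnerProd g ∧ IsJOp B g J ∧ d = deltaOf g J }

end

noncomputable section

open scoped RealInnerProductSpace

set_option maxHeartbeats 1000000 in
/-- Converse stability estimate: the H-type deviation relative to a vertical inner product
`g` is controlled by the supremum of the eikonal defect of the Kaplan quasinorm:
`δ(g) ≤ (3√3/2) · sup { | ‖x‖²/N² − (‖x‖⁶ + 16 ‖J_t x‖²)/N⁶ | : (x,t) ≠ (0,0) }`. -/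
theorem deviation_le_eikonal_defect
    {V₁ : Type*} [NormedAddCommGroup V₁] [InnerProductSpace ℝ V₁] [FiniteDimensional ℝ V₁]
    {V₂ : Type*} [AddCommGroup V₂] [Module ℝ V₂] [FiniteDimensional ℝ V₂]
    (m : ℕ) (hm : 1 ≤ m) (hdim₁ : Module.finrank ℝ V₁ = m)
    (hdim₂ : 1 ≤ Module.finrank ℝ V₂)
    (B : V₁ →ₗ[ℝ] V₁ →ₗ[ℝ] V₂)
    (hAlt : ∀ U : V₁, B U U = 0)
    (hSpan : Submodule.span ℝ {t : V₂ | ∃ U V : V₁, B U V = t} = ⊤)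
    (g : V₂ →ₗ[ℝ] V₂ →ₗ[ℝ] ℝ) (hg : IsInnerProd g)
    (J : V₂ → V₁ →ₗ[ℝ] V₁) (hJ : IsJOp B g J)
    (N : V₁ → V₂ → ℝ)
    (hN : ∀ (x : V₁) (t : V₂), N x t = (‖x‖ ^ 4 + 16 * gnorm g t ^ 2) ^ ((1 : ℝ) / 4)) :
    deltaOf g J ≤ (3 * Real.sqrt 3 / 2) *
      sSup { r : ℝ | ∃ (x : V₁) (t : V₂), ¬(x = 0 ∧ t = 0) ∧
        r = |‖x‖ ^ 2 / N x t ^ 2 - (‖x‖ ^ 6 + 16 * ‖J t x‖ ^ 2) / N x t ^ 6| } := by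
  classical
  set S : Set ℝ := { r : ℝ | ∃ (x : V₁) (t : V₂), ¬(x = 0 ∧ t = 0) ∧
      r = |‖x‖ ^ 2 / N x t ^ 2 - (‖x‖ ^ 6 + 16 * ‖J t x‖ ^ 2) / N x t ^ 6| } with hSdef
  set D : ℝ := sSup S with hDdef
  -- basic facts about g
  have hgnn : ∀ t : V₂, 0 ≤ g t t := by
    intro t
    rcases eq_or_ne t 0 with rfl | ht
    · simp
    · exact (hg.posdef t ht).le
  have hgnorm_sq : ∀ t : V₂, gnorm g t ^ 2 = g t t := by
    intro t; rw [gnorm, Real.sq_sqrt (hgnn t)]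
  have hgn0 : ∀ t : V₂, 0 ≤ gnorm g t := fun t => Real.sqrt_nonneg _
  -- antisymmetry of B
  have hBanti : ∀ u w : V₁, B w u = - B u w := by
    intro u w
    have h := hAlt (u + w)
    simp only [map_add, LinearMap.add_apply, hAlt, zero_add, add_zero] at h
    exact eq_neg_of_add_eq_zero_left h
  -- skew-symmetry of J T
  have hskew : ∀ (T : V₂) (u w : V₁), ⟪J T u, w⟫ = -⟪u, J T w⟫ := by
    intro T u w
    rw [hJ, real_inner_comm, hJ, hBanti u w, map_neg, LinearMap.neg_apply, neg_neg]
  -- linearity of J in the vertical variable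
  have Lmap : ∀ x : V₁, ∃ L : V₂ →ₗ[ℝ] V₁, ∀ t, L t = J t x := by
    intro x
    refine ⟨{ toFun := fun t => J t x
              map_add' := ?_
              map_smul' := ?_ }, fun t => rfl⟩
    · intro a b
      apply ext_inner_right ℝ
      intro w
      rw [inner_add_left, hJ, hJ, hJ, map_add]
    · intro c a
      apply ext_inner_right ℝ
      intro w
      rw [RingHom.id_apply, real_inner_smul_left, hJ, hJ, map_smul, smul_eq_mul]
  have hJsmul : ∀ (c : ℝ) (T : V₂) (x : V₁), J (c • T) x = c • J T x := by
    intro c T x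
    obtain ⟨L, hL⟩ := Lmap x
    rw [← hL, ← hL, map_smul]
  -- a uniform bound for J via a g-orthogonal basis
  obtain ⟨v, hv⟩ : ∃ v : Module.Basis (Fin (Module.finrank ℝ V₂)) ℝ V₂, LinearMap.IsOrthoᵢ g v := by
    haveI : Invertible (2:ℝ) := invertibleOfNonzero two_ne_zero
    exact LinearMap.BilinForm.exists_orthogonal_basis (LinearMap.isSymm_def.2 fun x y => hg.symm x y)
  set d : Fin (Module.finrank ℝ V₂) → ℝ := fun i => g (v i) (v i) with hddef
  have hdpos : ∀ i, 0 < d i := fun i => hg.posdef (v i) (v.ne_zero i)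
  have hcoord : ∀ (t : V₂) (i : Fin (Module.finrank ℝ V₂)),
      (v.repr t i) ^ 2 * d i ≤ g t t := by
    intro t i
    have hexp : g t t = ∑ j, (v.repr t j) ^ 2 * d j := by
      conv_lhs => rw [← v.sum_repr t]
      simp only [map_sum, map_smul, LinearMap.coe_sum, Finset.sum_apply,
        LinearMap.smul_apply, smul_eq_mul, Finset.mul_sum]
      refine Finset.sum_congr rfl fun j _ => ?_
      rw [Finset.sum_eq_single j]
      · simp only [hddef]; ring
      · intro k _ hk
        rw [LinearMap.isOrtho_def.mp (hv hk)]
        ring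
      · intro h; exact absurd (Finset.mem_univ j) h
    rw [hexp]
    exact Finset.single_le_sum (fun j _ => mul_nonneg (sq_nonneg _) (hdpos j).le)
      (Finset.mem_univ i)
  have hcoord' : ∀ (t : V₂) (i : Fin (Module.finrank ℝ V₂)),
      |v.repr t i| ≤ gnorm g t * (Real.sqrt (d i))⁻¹ := by
    intro t i
    have hdi : 0 < Real.sqrt (d i) := Real.sqrt_pos.2 (hdpos i)
    have h1 : |v.repr t i| * Real.sqrt (d i) ≤ gnorm g t := by
      rw [← Real.sqrt_sq_eq_abs, ← Real.sqrt_mul (sq_nonneg _)]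
      exact Real.sqrt_le_sqrt (hcoord t i)
    calc |v.repr t i| = |v.repr t i| * Real.sqrt (d i) * (Real.sqrt (d i))⁻¹ := by
          field_simp
      _ ≤ gnorm g t * (Real.sqrt (d i))⁻¹ :=
          mul_le_mul_of_nonneg_right h1 (by positivity)
  set C : ℝ := ∑ i, (Real.sqrt (d i))⁻¹ * ‖LinearMap.toContinuousLinearMap (J (v i))‖
    with hCdef
  have hC0 : 0 ≤ C :=
    Finset.sum_nonneg fun i _ => mul_nonneg (by positivity) (norm_nonneg _)
  have hJbound : ∀ (t : V₂) (x : V₁), ‖J t x‖ ≤ C * gnorm g t * ‖x‖ := by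
    intro t x
    obtain ⟨L, hL⟩ := Lmap x
    have hrepr : J t x = ∑ i, v.repr t i • J (v i) x := by
      rw [← hL]
      conv_lhs => rw [← v.sum_repr t]
      rw [map_sum]
      refine Finset.sum_congr rfl fun i _ => ?_
      rw [map_smul, hL]
    rw [hrepr]
    calc ‖∑ i, v.repr t i • J (v i) x‖ ≤ ∑ i, ‖v.repr t i • J (v i) x‖ :=
          norm_sum_le _ _
      _ ≤ ∑ i, (gnorm g t * (Real.sqrt (d i))⁻¹) *
            (‖LinearMap.toContinuousLinearMap (J (v i))‖ * ‖x‖) := by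
          refine Finset.sum_le_sum fun i _ => ?_
          rw [norm_smul, Real.norm_eq_abs]
          have h2 : ‖J (v i) x‖ ≤ ‖LinearMap.toContinuousLinearMap (J (v i))‖ * ‖x‖ :=
            (LinearMap.toContinuousLinearMap (J (v i))).le_opNorm x
          exact mul_le_mul (hcoord' t i) h2 (norm_nonneg _)
            (mul_nonneg (hgn0 t) (by positivity))
      _ = C * gnorm g t * ‖x‖ := by
          rw [hCdef, Finset.sum_mul, Finset.sum_mul]
          refine Finset.sum_congr rfl fun i _ => ?_
          ring
  -- positivity of the quasinorm off the origin
  have hQpos : ∀ (x : V₁) (t : V₂), ¬(x = 0 ∧ t = 0) →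
      0 < ‖x‖ ^ 4 + 16 * gnorm g t ^ 2 := by
    intro x t hxt
    rcases eq_or_ne x 0 with rfl | hx
    · have ht : t ≠ 0 := fun h => hxt ⟨rfl, h⟩
      have h1 : 0 < gnorm g t := Real.sqrt_pos.2 (hg.posdef t ht)
      have h2 : (0:ℝ) ≤ ‖(0:V₁)‖ ^ 4 := by positivity
      nlinarith
    · have h1 : 0 < ‖x‖ := norm_pos_iff.2 hx
      nlinarith [pow_pos h1 4, sq_nonneg (gnorm g t)]
  have hN4 : ∀ (x : V₁) (t : V₂), ¬(x = 0 ∧ t = 0) →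
      N x t ^ 4 = ‖x‖ ^ 4 + 16 * gnorm g t ^ 2 := by
    intro x t hxt
    rw [hN, ← Real.rpow_natCast (_ ^ ((1:ℝ)/4)) 4, ← Real.rpow_mul (hQpos x t hxt).le]
    norm_num
  have hNpos : ∀ (x : V₁) (t : V₂), ¬(x = 0 ∧ t = 0) → 0 < N x t := by
    intro x t hxt
    rw [hN]
    exact Real.rpow_pos_of_pos (hQpos x t hxt) _
  have hx2N : ∀ (x : V₁) (t : V₂), ¬(x = 0 ∧ t = 0) → ‖x‖ ^ 2 ≤ N x t ^ 2 := by
    intro x t hxt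
    have h4 : ‖x‖ ^ 4 ≤ N x t ^ 4 := by
      rw [hN4 x t hxt]; nlinarith [sq_nonneg (gnorm g t)]
    have h5 := Real.sqrt_le_sqrt h4
    rwa [show ‖x‖ ^ 4 = (‖x‖ ^ 2) ^ 2 by ring, show N x t ^ 4 = (N x t ^ 2) ^ 2 by ring,
      Real.sqrt_sq (sq_nonneg _), Real.sqrt_sq (sq_nonneg _)] at h5
  have hg2N : ∀ (x : V₁) (t : V₂), ¬(x = 0 ∧ t = 0) → 16 * gnorm g t ^ 2 ≤ N x t ^ 4 := by
    intro x t hxt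
    rw [hN4 x t hxt]
    nlinarith [pow_nonneg (norm_nonneg x) 4]
  -- S is bounded above
  have hSbd : BddAbove S := by
    refine ⟨2 + C ^ 2, ?_⟩
    rintro r ⟨x, t, hxt, rfl⟩
    have hNp := hNpos x t hxt
    have hN2p : 0 < N x t ^ 2 := pow_pos hNp 2
    have hN6p : 0 < N x t ^ 6 := pow_pos hNp 6
    have ha0 : 0 ≤ ‖x‖ ^ 2 / N x t ^ 2 := by positivity
    have hb0 : 0 ≤ (‖x‖ ^ 6 + 16 * ‖J t x‖ ^ 2) / N x t ^ 6 := by positivity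
    have ha1 : ‖x‖ ^ 2 / N x t ^ 2 ≤ 1 := by
      rw [div_le_one hN2p]; exact hx2N x t hxt
    have hb1 : (‖x‖ ^ 6 + 16 * ‖J t x‖ ^ 2) / N x t ^ 6 ≤ 1 + C ^ 2 := by
      rw [div_le_iff₀ hN6p]
      have h6 : ‖x‖ ^ 6 ≤ N x t ^ 6 := by
        calc ‖x‖ ^ 6 = (‖x‖ ^ 2) ^ 3 := by ring
          _ ≤ (N x t ^ 2) ^ 3 := pow_le_pow_left₀ (sq_nonneg _) (hx2N x t hxt) 3
          _ = N x t ^ 6 := by ring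
      have hJb := hJbound t x
      have hJ2 : ‖J t x‖ ^ 2 ≤ (C * gnorm g t * ‖x‖) ^ 2 :=
        pow_le_pow_left₀ (norm_nonneg _) hJb 2
      have e1 : 16 * ‖J t x‖ ^ 2 ≤ C ^ 2 * (16 * gnorm g t ^ 2) * ‖x‖ ^ 2 := by
        nlinarith [hJ2]
      have e2 : C ^ 2 * (16 * gnorm g t ^ 2) * ‖x‖ ^ 2 ≤ C ^ 2 * N x t ^ 4 * N x t ^ 2 :=
        mul_le_mul (mul_le_mul_of_nonneg_left (hg2N x t hxt) (sq_nonneg C))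
          (hx2N x t hxt) (sq_nonneg _) (by positivity)
      nlinarith [h6, e1, e2]
    exact abs_le.2 ⟨by linarith, by linarith⟩
  -- S is nonempty, D is nonnegative
  have hD0 : 0 ≤ D := by
    have hrk : 0 < Module.finrank ℝ V₁ := by omega
    haveI : Nontrivial V₁ := Module.nontrivial_of_finrank_pos hrk
    obtain ⟨x₀, hx₀⟩ := exists_ne (0 : V₁)
    have hmem₀ : |‖x₀‖ ^ 2 / N x₀ 0 ^ 2 - (‖x₀‖ ^ 6 + 16 * ‖J 0 x₀‖ ^ 2) / N x₀ 0 ^ 6| ∈ S :=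
      ⟨x₀, 0, fun h => hx₀ h.1, rfl⟩
    exact le_trans (abs_nonneg _) (le_csSup hSbd hmem₀)
  -- main estimate
  rw [deltaOf, hdim₁]
  have hm0 : (0:ℝ) < Real.sqrt m := by
    apply Real.sqrt_pos.2
    exact_mod_cast Nat.lt_of_lt_of_le Nat.zero_lt_one hm
  have hK0 : 0 ≤ 3 * Real.sqrt 3 / 2 * D := mul_nonneg (by positivity) hD0
  have hsup : sSup ((fun T => hsNorm (J T ∘ₗ J T + LinearMap.id)) ''
      {T : V₂ | gnorm g T = 1}) ≤ Real.sqrt m * (3 * Real.sqrt 3 / 2 * D) := by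
    apply Real.sSup_le
    · rintro y ⟨T, hT, rfl⟩
      have hT' : gnorm g T = 1 := hT
      have hTT : g T T = 1 := by
        have h := hT'
        rw [gnorm] at h
        nlinarith [Real.sq_sqrt (hgnn T)]
      set A := J T with hAdef
      have hskT : ∀ u w : V₁, ⟪A u, w⟫ = -⟪u, A w⟫ := hskew T
      have hSym : (A ∘ₗ A).IsSymmetric := by
        intro u w
        simp only [LinearMap.comp_apply]
        rw [hskT, hskT, neg_neg]
      set e := hSym.eigenvectorBasis hdim₁ with hedef
      set ν := hSym.eigenvalues hdim₁ with hνdef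
      have happ : ∀ i, A (A (e i)) = ν i • e i := by
        intro i
        have h := hSym.apply_eigenvectorBasis hdim₁ i
        rw [LinearMap.comp_apply] at h
        exact_mod_cast h
      have hnorme : ∀ i, ‖e i‖ = 1 := fun i => e.orthonormal.1 i
      have hnu : ∀ i, ‖A (e i)‖ ^ 2 = -ν i := by
        intro i
        have h1 : ⟪A (A (e i)), e i⟫ = ν i := by
          rw [happ, real_inner_smul_left, real_inner_self_eq_norm_sq, hnorme]
          ring
        have h2 : ⟪A (A (e i)), e i⟫ = -‖A (e i)‖ ^ 2 := by
          rw [hskT, real_inner_self_eq_norm_sq]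
        linarith [h1.symm.trans h2]
      -- the per-eigenvalue estimate via the eikonal defect
      have hperi : ∀ i, |ν i + 1| ≤ 3 * Real.sqrt 3 / 2 * D := by
        intro i
        set s : ℝ := (Real.sqrt 8)⁻¹ with hsdef
        have hs2 : s ^ 2 = 1 / 8 := by
          rw [hsdef, ← Real.sqrt_inv, Real.sq_sqrt (by norm_num)]
          norm_num
        have hgt2 : gnorm g (s • T) ^ 2 = 1 / 8 := by
          rw [hgnorm_sq]
          simp only [map_smul, LinearMap.smul_apply, smul_eq_mul]
          rw [hTT, ← hs2]
          ring
        have hxt : ¬((e i) = (0:V₁) ∧ s • T = 0) := by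
          rintro ⟨h1, -⟩
          have h := hnorme i
          rw [h1] at h
          simp at h
        have hNv2 : N (e i) (s • T) ^ 2 = Real.sqrt 3 := by
          rw [hN, hnorme, hgt2]
          norm_num
          rw [← Real.rpow_natCast ((3:ℝ) ^ ((1:ℝ)/4)) 2, ← Real.rpow_mul (by norm_num)]
          norm_num [Real.sqrt_eq_rpow]
        have hNv6 : N (e i) (s • T) ^ 6 = 3 * Real.sqrt 3 := by
          have h : N (e i) (s • T) ^ 6 = (N (e i) (s • T) ^ 2) ^ 3 := by ring
          rw [h, hNv2, pow_succ, sq, Real.mul_self_sqrt (by norm_num)]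
        have hJts : ‖J (s • T) (e i)‖ ^ 2 = 1 / 8 * (-ν i) := by
          rw [hJsmul, norm_smul, Real.norm_eq_abs, mul_pow, sq_abs, hs2, ← hAdef, hnu]
        have hmem : |‖e i‖ ^ 2 / N (e i) (s • T) ^ 2 -
            (‖e i‖ ^ 6 + 16 * ‖J (s • T) (e i)‖ ^ 2) / N (e i) (s • T) ^ 6| ∈ S :=
          ⟨e i, s • T, hxt, rfl⟩
        have hle : |‖e i‖ ^ 2 / N (e i) (s • T) ^ 2 -
            (‖e i‖ ^ 6 + 16 * ‖J (s • T) (e i)‖ ^ 2) / N (e i) (s • T) ^ 6| ≤ D :=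
          le_csSup hSbd hmem
        have h3 : (0:ℝ) < Real.sqrt 3 := Real.sqrt_pos.2 (by norm_num)
        have h33 : Real.sqrt 3 * Real.sqrt 3 = 3 := Real.mul_self_sqrt (by norm_num)
        have hval : 3 * Real.sqrt 3 / 2 * (‖e i‖ ^ 2 / N (e i) (s • T) ^ 2 -
            (‖e i‖ ^ 6 + 16 * ‖J (s • T) (e i)‖ ^ 2) / N (e i) (s • T) ^ 6) = ν i + 1 := by
          rw [hnorme, hNv2, hNv6, hJts]
          field_simp
          ring_nf
        calc |ν i + 1| = 3 * Real.sqrt 3 / 2 * |‖e i‖ ^ 2 / N (e i) (s • T) ^ 2 -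
              (‖e i‖ ^ 6 + 16 * ‖J (s • T) (e i)‖ ^ 2) / N (e i) (s • T) ^ 6| := by
              rw [← hval, abs_mul, abs_of_nonneg (by positivity : (0:ℝ) ≤ 3 * Real.sqrt 3 / 2)]
          _ ≤ 3 * Real.sqrt 3 / 2 * D := mul_le_mul_of_nonneg_left hle (by positivity)
      -- trace computation
      have hGdiag : ∀ i, ((A ∘ₗ A + LinearMap.id) ∘ₗ (A ∘ₗ A + LinearMap.id)) (e.toBasis i)
          = ((ν i + 1) ^ 2) • e.toBasis i := by
        intro i
        simp only [OrthonormalBasis.coe_toBasis, LinearMap.comp_apply, LinearMap.add_apply,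
          LinearMap.id_apply, map_add, map_smul, happ]
        module
      have htrace : LinearMap.trace ℝ V₁
          ((A ∘ₗ A + LinearMap.id) ∘ₗ (A ∘ₗ A + LinearMap.id)) = ∑ i, (ν i + 1) ^ 2 := by
        rw [LinearMap.trace_eq_matrix_trace ℝ e.toBasis, Matrix.trace]
        congr 1
        ext i
        rw [Matrix.diag_apply, LinearMap.toMatrix_apply, hGdiag i, map_smul,
          Finsupp.smul_apply, Module.Basis.repr_self, Finsupp.single_eq_same, smul_eq_mul, mul_one]
      have hadj : LinearMap.adjoint (A ∘ₗ A + LinearMap.id) = A ∘ₗ A + LinearMap.id := by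
        have hsym2 : (A ∘ₗ A + LinearMap.id : V₁ →ₗ[ℝ] V₁).IsSymmetric := by
          intro u w
          simp only [LinearMap.add_apply, LinearMap.id_apply]
          rw [inner_add_left, inner_add_right, hSym u w]
        have h := (LinearMap.isSymmetric_iff_isSelfAdjoint _).1 hsym2
        rwa [IsSelfAdjoint, LinearMap.star_eq_adjoint] at h
      show hsNorm (A ∘ₗ A + LinearMap.id) ≤ Real.sqrt m * (3 * Real.sqrt 3 / 2 * D)
      rw [hsNorm, hadj, htrace]
      have h1 : ∑ i, (ν i + 1) ^ 2 ≤ (m:ℝ) * (3 * Real.sqrt 3 / 2 * D) ^ 2 := by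
        calc ∑ i, (ν i + 1) ^ 2 ≤ ∑ _i : Fin m, (3 * Real.sqrt 3 / 2 * D) ^ 2 := by
              apply Finset.sum_le_sum
              intro i _
              rw [← sq_abs]
              exact pow_le_pow_left₀ (abs_nonneg _) (hperi i) 2
          _ = (m:ℝ) * (3 * Real.sqrt 3 / 2 * D) ^ 2 := by
              simp [Finset.sum_const, mul_comm]
      calc Real.sqrt (∑ i, (ν i + 1) ^ 2) ≤
            Real.sqrt ((m:ℝ) * (3 * Real.sqrt 3 / 2 * D) ^ 2) := Real.sqrt_le_sqrt h1
        _ = Real.sqrt m * (3 * Real.sqrt 3 / 2 * D) := by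
            rw [Real.sqrt_mul (Nat.cast_nonneg m), Real.sqrt_sq hK0]
    · positivity
  calc (Real.sqrt m)⁻¹ * sSup ((fun T => hsNorm (J T ∘ₗ J T + LinearMap.id)) ''
        {T : V₂ | gnorm g T = 1})
      ≤ (Real.sqrt m)⁻¹ * (Real.sqrt m * (3 * Real.sqrt 3 / 2 * D)) :=
        mul_le_mul_of_nonneg_left hsup (by positivity)
    _ = 3 * Real.sqrt 3 / 2 * D := by
        field_simp

end
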